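/- For each fixed nonnegative integer r, the function Ψ₁(μ₁, ..., μₙ) = ∏_{k=1}^n (1/r!) ∫_0^{μ_k} e^{-t} t^r dt is Schur-concave on (0, ∞)^n. -/

import Mathlib

open MeasureTheory

/-- `x` majorizes `y`. -/
def Majorizes {n : ℕ} (x y : Fin n → ℝ) : Prop :=
  (∀ s : Finset (Fin n), ∃ t : Finset (Fin n),
      t.card = s.card ∧ ∑ i ∈ s, y i ≤ ∑ i ∈ t, x i) ∧
  ∑ i, x i = ∑ i, y i

namespace PSCaux
open Set


noncomputable def F (r : ℕ) (μ : ℝ) : ℝ := ∫ t in (0:ℝ)..μ, Real.exp (-t) * t ^ r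

theorem contInteg (r : ℕ) : Continuous fun t : ℝ => Real.exp (-t) * t ^ r :=
  (Real.continuous_exp.comp continuous_neg).mul (continuous_pow r)

theorem hasDerivF (r : ℕ) (μ : ℝ) : HasDerivAt (F r) (Real.exp (-μ) * μ ^ r) μ :=
  intervalIntegral.integral_hasDerivAt_right ((contInteg r).intervalIntegrable _ _)
    ((contInteg r).stronglyMeasurableAtFilter _ _) (contInteg r).continuousAt

theorem Fpos (r : ℕ) {μ : ℝ} (hμ : 0 < μ) : 0 < F r μ := by
  apply intervalIntegral.intervalIntegral_pos_of_pos_on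
    ((contInteg r).intervalIntegrable _ _) _ hμ
  intro t ht
  exact mul_pos (Real.exp_pos _) (pow_pos ht.1 r)

noncomputable def G (r : ℕ) (μ : ℝ) : ℝ :=
  Real.exp (-μ) * μ ^ (r + 1) - ((r : ℝ) - μ) * F r μ

theorem hasDerivG (r : ℕ) (μ : ℝ) :
    HasDerivAt (G r) (Real.exp (-μ) * μ ^ r + F r μ) μ := by
  have hexp : HasDerivAt (fun μ : ℝ => Real.exp (-μ)) (-Real.exp (-μ)) μ := by
    exact ((Real.hasDerivAt_exp (-μ)).comp μ ((hasDerivAt_id μ).neg)).congr_deriv (by simp)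
  have hpow : HasDerivAt (fun μ : ℝ => μ ^ (r + 1)) (((r : ℝ) + 1) * μ ^ r) μ := by
    simpa using hasDerivAt_pow (r + 1) μ
  have h1 : HasDerivAt (fun μ : ℝ => Real.exp (-μ) * μ ^ (r + 1))
      (-Real.exp (-μ) * μ ^ (r + 1) + Real.exp (-μ) * (((r : ℝ) + 1) * μ ^ r)) μ :=
    hexp.mul hpow
  have h2 : HasDerivAt (fun μ : ℝ => ((r : ℝ) - μ) * F r μ)
      ((-1) * F r μ + ((r : ℝ) - μ) * (Real.exp (-μ) * μ ^ r)) μ := by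
    have := (((hasDerivAt_const μ (r : ℝ)).sub (hasDerivAt_id μ))).mul (hasDerivF r μ)
    exact this.congr_deriv (by simp only [Pi.sub_apply, id]; ring)
  have h3 := h1.sub h2
  convert h3 using 1
  case e'_4 => rfl
  case e'_5 => rfl
  case e'_8 => rfl
  have h4 : μ ^ (r + 1) = μ ^ r * μ := pow_succ μ r
  rw [h4]; ring

theorem G_zero (r : ℕ) : G r 0 = 0 := by
  simp [G, F, intervalIntegral.integral_same]

theorem key (r : ℕ) {μ : ℝ} (hμ : 0 ≤ μ) :
    ((r : ℝ) - μ) * F r μ ≤ Real.exp (-μ) * μ ^ (r + 1) := by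
  have hmono : MonotoneOn (G r) (Ici (0 : ℝ)) := by
    apply monotoneOn_of_deriv_nonneg (convex_Ici 0)
    · exact (Differentiable.continuous fun μ => (hasDerivG r μ).differentiableAt).continuousOn
    · exact Differentiable.differentiableOn fun μ => (hasDerivG r μ).differentiableAt
    · intro ν hν
      rw [interior_Ici] at hν
      rw [(hasDerivG r ν).deriv]
      have h1 : 0 < Real.exp (-ν) * ν ^ r := mul_pos (Real.exp_pos _) (pow_pos hν r)
      have h2 : 0 < F r ν := Fpos r hν
      linarith
  have h5 := hmono (self_mem_Ici) hμ hμ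
  rw [G_zero] at h5
  unfold G at h5
  linarith

theorem numle (r : ℕ) {μ : ℝ} (hμ : 0 < μ) :
    ((r : ℝ) * μ ^ (r - 1) - μ ^ r) * F r μ ≤ Real.exp (-μ) * (μ ^ r * μ ^ r) := by
  rcases Nat.eq_zero_or_pos r with hr | hr
  · subst hr
    simp only [Nat.cast_zero, pow_zero, Nat.zero_sub, zero_mul, zero_sub]
    have h0 := Fpos 0 hμ
    have h1 : 0 < Real.exp (-μ) * ((1:ℝ) * 1) := by positivity
    unfold F at h0 ⊢
    simp only [pow_zero] at h0 ⊢
    linarith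
  · have hfac : ((r : ℝ) * μ ^ (r - 1) - μ ^ r) = μ ^ (r - 1) * ((r : ℝ) - μ) := by
      have h6 : μ ^ r = μ ^ (r - 1) * μ := by
        rw [← pow_succ, Nat.sub_add_cancel hr]
      rw [h6]; ring
    rw [hfac, mul_assoc]
    have h1 : μ ^ (r - 1) * (((r : ℝ) - μ) * F r μ)
        ≤ μ ^ (r - 1) * (Real.exp (-μ) * μ ^ (r + 1)) :=
      mul_le_mul_of_nonneg_left (key r hμ.le) (by positivity)
    refine h1.trans_eq ?_
    have h7 : μ ^ (r - 1) * μ ^ (r + 1) = μ ^ r * μ ^ r := by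
      rw [← pow_add, ← pow_add]
      congr 1
      omega
    rw [← h7]; ring

noncomputable def hfun (r : ℕ) (μ : ℝ) : ℝ := Real.exp (-μ) * μ ^ r / F r μ

theorem hasDerivh (r : ℕ) {μ : ℝ} (hμ : 0 < μ) :
    HasDerivAt (hfun r)
      (((-Real.exp (-μ) * μ ^ r + Real.exp (-μ) * ((r : ℝ) * μ ^ (r - 1))) * F r μ
        - Real.exp (-μ) * μ ^ r * (Real.exp (-μ) * μ ^ r)) / (F r μ) ^ 2) μ := by
  have hexp : HasDerivAt (fun μ : ℝ => Real.exp (-μ)) (-Real.exp (-μ)) μ := by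
    exact ((Real.hasDerivAt_exp (-μ)).comp μ ((hasDerivAt_id μ).neg)).congr_deriv (by simp)
  have hnum : HasDerivAt (fun μ : ℝ => Real.exp (-μ) * μ ^ r)
      (-Real.exp (-μ) * μ ^ r + Real.exp (-μ) * ((r : ℝ) * μ ^ (r - 1))) μ :=
    hexp.mul (hasDerivAt_pow r μ)
  exact hnum.div (hasDerivF r μ) (Fpos r hμ).ne'

theorem hfun_anti (r : ℕ) : AntitoneOn (hfun r) (Ioi (0 : ℝ)) := by
  apply antitoneOn_of_deriv_nonpos (convex_Ioi 0)
  · intro μ hμ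
    exact ((hasDerivh r hμ).differentiableAt).continuousAt.continuousWithinAt
  · rw [interior_Ioi]
    intro μ hμ
    exact ((hasDerivh r hμ).differentiableAt).differentiableWithinAt
  · rw [interior_Ioi]
    intro μ hμ
    rw [(hasDerivh r hμ).deriv]
    apply div_nonpos_of_nonpos_of_nonneg _ (sq_nonneg _)
    have hb : ((r : ℝ) * μ ^ (r - 1) - μ ^ r) * F r μ
        - Real.exp (-μ) * (μ ^ r * μ ^ r) ≤ 0 := sub_nonpos.mpr (numle r hμ)
    have heq : (-Real.exp (-μ) * μ ^ r + Real.exp (-μ) * ((r : ℝ) * μ ^ (r - 1))) * F r μ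
        - Real.exp (-μ) * μ ^ r * (Real.exp (-μ) * μ ^ r)
        = Real.exp (-μ) * (((r : ℝ) * μ ^ (r - 1) - μ ^ r) * F r μ
          - Real.exp (-μ) * (μ ^ r * μ ^ r)) := by ring
    rw [heq]
    exact mul_nonpos_of_nonneg_of_nonpos (Real.exp_pos _).le hb


noncomputable def g (r : ℕ) (μ : ℝ) : ℝ := Real.log (F r μ)

theorem hasDerivg (r : ℕ) {μ : ℝ} (hμ : 0 < μ) : HasDerivAt (g r) (hfun r μ) μ :=
  (hasDerivF r μ).log (Fpos r hμ).ne'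

theorem tangent (r : ℕ) {u v : ℝ} (hu : 0 < u) (hv : 0 < v) :
    g r u ≤ g r v + hfun r v * (u - v) := by
  rcases lt_trichotomy u v with h | h | h
  · obtain ⟨c, hc, heq⟩ := exists_hasDerivAt_eq_slope (g r) (hfun r) h
      (fun t ht => (hasDerivg r (lt_of_lt_of_le hu ht.1)).continuousAt.continuousWithinAt)
      (fun t ht => hasDerivg r (lt_trans hu ht.1))
    have hcpos : 0 < c := lt_trans hu hc.1
    have hanti : hfun r v ≤ hfun r c := hfun_anti r (mem_Ioi.mpr hcpos) (mem_Ioi.mpr hv) hc.2.le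
    rw [heq] at hanti
    have hvu : 0 < v - u := sub_pos.mpr h
    have := (le_div_iff₀ hvu).mp hanti
    linarith
  · subst h; simp
  · obtain ⟨c, hc, heq⟩ := exists_hasDerivAt_eq_slope (g r) (hfun r) h
      (fun t ht => (hasDerivg r (lt_of_lt_of_le hv ht.1)).continuousAt.continuousWithinAt)
      (fun t ht => hasDerivg r (lt_trans hv ht.1))
    have hcpos : 0 < c := lt_trans hv hc.1
    have hanti : hfun r c ≤ hfun r v := hfun_anti r (mem_Ioi.mpr hv) (mem_Ioi.mpr hcpos) hc.1.le
    rw [heq] at hanti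
    have huv : 0 < u - v := sub_pos.mpr h
    have := (div_le_iff₀ huv).mp hanti
    linarith

theorem abel (n : ℕ) (c E : ℕ → ℝ)
    (hc : ∀ i j, i ≤ j → j < n → c j ≤ c i)
    (hE0 : E 0 = 0) (hEn : E n = 0) (hEle : ∀ k, k ≤ n → E k ≤ 0) :
    ∑ i ∈ Finset.range n, c i * (E (i + 1) - E i) ≤ 0 := by
  rcases Nat.eq_zero_or_pos n with hn | hn
  · subst hn; simp
  · have claim : ∀ m, 1 ≤ m → m ≤ n →
        ∑ i ∈ Finset.range m, c i * (E (i + 1) - E i) ≤ c (m - 1) * E m := by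
      intro m h1 h2
      induction m, h1 using Nat.le_induction with
      | base => simp [Finset.sum_range_one, hE0]
      | succ m hm ih =>
        have hmn : m ≤ n := le_of_lt (Nat.lt_of_succ_le h2)
        have hS := ih hmn
        rw [Finset.sum_range_succ]
        have hcc : c m ≤ c (m - 1) := hc (m - 1) m (Nat.sub_le m 1) (Nat.lt_of_succ_le h2)
        have hEm : E m ≤ 0 := hEle m hmn
        have hmul : (c (m - 1) - c m) * E m ≤ 0 :=
          mul_nonpos_of_nonneg_of_nonpos (by linarith) hEm
        have : m + 1 - 1 = m := rfl
        rw [this]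
        nlinarith [hS]
    have := claim n hn le_rfl
    rw [hEn] at this
    simpa using this

theorem hlp (r n : ℕ) (a b : ℕ → ℝ)
    (ha : ∀ i, i < n → 0 < a i) (hb : ∀ i, i < n → 0 < b i)
    (hbmono : ∀ i j, i ≤ j → j < n → b i ≤ b j)
    (hpartial : ∀ k, k ≤ n →
      ∑ i ∈ Finset.range k, a i ≤ ∑ i ∈ Finset.range k, b i)
    (htot : ∑ i ∈ Finset.range n, a i = ∑ i ∈ Finset.range n, b i) :
    ∑ i ∈ Finset.range n, g r (a i) ≤ ∑ i ∈ Finset.range n, g r (b i) := by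
  have step1 : ∑ i ∈ Finset.range n, g r (a i)
      ≤ ∑ i ∈ Finset.range n, (g r (b i) + hfun r (b i) * (a i - b i)) := by
    apply Finset.sum_le_sum
    intro i hi
    exact tangent r (ha i (Finset.mem_range.mp hi)) (hb i (Finset.mem_range.mp hi))
  rw [Finset.sum_add_distrib] at step1
  have step2 : ∑ i ∈ Finset.range n, hfun r (b i) * (a i - b i) ≤ 0 := by
    set E : ℕ → ℝ := fun k => ∑ i ∈ Finset.range k, a i - ∑ i ∈ Finset.range k, b i with hE
    have habE : ∀ i, a i - b i = E (i + 1) - E i := by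
      intro i
      simp only [hE, Finset.sum_range_succ]
      ring
    calc ∑ i ∈ Finset.range n, hfun r (b i) * (a i - b i)
        = ∑ i ∈ Finset.range n, (fun i => hfun r (b i)) i * (E (i + 1) - E i) := by
          apply Finset.sum_congr rfl; intro i _; rw [habE]
      _ ≤ 0 := by
          apply abel n _ E
          · intro i j hij hj
            exact hfun_anti r (mem_Ioi.mpr (hb i (lt_of_le_of_lt hij hj)))
              (mem_Ioi.mpr (hb j hj)) (hbmono i j hij hj)
          · simp [hE]
          · simp only [hE]; linarith [htot]
          · intro k hk; simp only [hE]; linarith [hpartial k hk]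
  linarith




theorem sum_le_of_card_eq {n : ℕ} (w : Fin n → ℝ) (T : Finset (Fin n))
    (hT : ∀ i j, i ∉ T → j ∈ T → w i ≤ w j) :
    ∀ (d : ℕ) (u : Finset (Fin n)), (u \ T).card = d → u.card = T.card →
      ∑ i ∈ u, w i ≤ ∑ i ∈ T, w i := by
  intro d
  induction d with
  | zero =>
    intro u hd hcard
    have h0 : u \ T = ∅ := Finset.card_eq_zero.mp hd
    have hsub : u ⊆ T := Finset.sdiff_eq_empty_iff_subset.mp h0
    have : u = T := Finset.eq_of_subset_of_card_le hsub (le_of_eq hcard.symm)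
    rw [this]
  | succ d ih =>
    intro u hd hcard
    obtain ⟨i, hi⟩ := Finset.card_pos.mp (by omega : 0 < (u \ T).card)
    have hcard2 : (T \ u).card = d + 1 := by
      have h1 := Finset.card_sdiff_add_card_inter u T
      have h2 := Finset.card_sdiff_add_card_inter T u
      rw [Finset.inter_comm] at h2
      omega
    obtain ⟨j, hj⟩ := Finset.card_pos.mp (by omega : 0 < (T \ u).card)
    have hiu : i ∈ u := (Finset.mem_sdiff.mp hi).1
    have hiT : i ∉ T := (Finset.mem_sdiff.mp hi).2
    have hjT : j ∈ T := (Finset.mem_sdiff.mp hj).1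
    have hjnu : j ∉ u := (Finset.mem_sdiff.mp hj).2
    have hij : w i ≤ w j := hT i j hiT hjT
    have hjne : j ∉ u.erase i := fun h => hjnu (Finset.mem_of_mem_erase h)
    set u' := insert j (u.erase i) with hu'
    have hcard' : u'.card = T.card := by
      rw [hu', Finset.card_insert_of_notMem hjne, Finset.card_erase_of_mem hiu]
      have : 0 < u.card := Finset.card_pos.mpr ⟨i, hiu⟩
      omega
    have hd' : (u' \ T).card = d := by
      have hset : u' \ T = (u \ T).erase i := by
        ext z
        simp only [hu', Finset.mem_sdiff, Finset.mem_insert, Finset.mem_erase]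
        constructor
        · rintro ⟨hz1 | ⟨hz2, hz3⟩, hz4⟩
          · exact absurd (hz1 ▸ hjT) hz4
          · exact ⟨hz2, hz3, hz4⟩
        · rintro ⟨hz1, hz2, hz3⟩
          exact ⟨Or.inr ⟨hz1, hz2⟩, hz3⟩
      rw [hset, Finset.card_erase_of_mem hi, hd]; omega
    have hsum : ∑ z ∈ u, w z ≤ ∑ z ∈ u', w z := by
      rw [hu', Finset.sum_insert hjne, Finset.sum_erase_eq_sub hiu]
      linarith
    exact hsum.trans (ih u' hd' hcard')

theorem sum_le_top {n : ℕ} (w : Fin n → ℝ) (hw : Monotone w) (k : ℕ)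
    (u : Finset (Fin n))
    (hcard : u.card = (Finset.univ.filter fun i : Fin n => k ≤ i.val).card) :
    ∑ i ∈ u, w i ≤ ∑ i ∈ Finset.univ.filter (fun i : Fin n => k ≤ i.val), w i := by
  apply sum_le_of_card_eq w _ _ _ u rfl hcard
  intro i j hi hj
  simp only [Finset.mem_filter, Finset.mem_univ, true_and, not_le] at hi hj
  exact hw (by rw [Fin.le_def]; omega)


/-- extension of a Fin tuple to ℕ -/
noncomputable def ext {n : ℕ} (f : Fin n → ℝ) : ℕ → ℝ :=
  fun i => if h : i < n then f ⟨i, h⟩ else 0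

theorem ext_lt {n : ℕ} (f : Fin n → ℝ) {i : ℕ} (hi : i < n) :
    ext f i = f ⟨i, hi⟩ := dif_pos hi

theorem sumlow {n : ℕ} (k : ℕ) (hk : k ≤ n) (f : Fin n → ℝ) :
    ∑ i ∈ Finset.range k, ext f i
      = ∑ i ∈ Finset.univ.filter (fun i : Fin n => i.val < k), f i := by
  have h1 : Finset.range k = (Finset.range n).filter (· < k) := by
    ext i; simp only [Finset.mem_range, Finset.mem_filter]; omega
  calc ∑ i ∈ Finset.range k, ext f i
      = ∑ i ∈ (Finset.range n).filter (· < k), ext f i := by rw [← h1]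
    _ = ∑ i ∈ Finset.range n, if i < k then ext f i else 0 := Finset.sum_filter _ _
    _ = ∑ i : Fin n, (if (i : ℕ) < k then ext f i else 0) :=
        (Fin.sum_univ_eq_sum_range (fun i => if i < k then ext f i else 0) n).symm
    _ = ∑ i : Fin n, (if (i : ℕ) < k then f i else 0) := by
        apply Finset.sum_congr rfl
        intro i _
        by_cases h : (i : ℕ) < k
        · simp only [h, if_true, ext, i.isLt, dif_pos, Fin.eta]
        · simp [h]
    _ = ∑ i ∈ Finset.univ.filter (fun i : Fin n => i.val < k), f i :=
        (Finset.sum_filter _ _).symm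

theorem cardlow {n : ℕ} (k : ℕ) (hk : k ≤ n) :
    (Finset.univ.filter fun i : Fin n => i.val < k).card = k := by
  rw [Finset.card_filter]
  rw [Fin.sum_univ_eq_sum_range (fun i => if i < k then 1 else 0) n]
  rw [← Finset.sum_filter]
  have h1 : (Finset.range n).filter (· < k) = Finset.range k := by
    ext i; simp only [Finset.mem_range, Finset.mem_filter]; omega
  rw [h1, Finset.sum_const, Finset.card_range, smul_eq_mul, mul_one]

theorem cardtop {n : ℕ} (k : ℕ) (hk : k ≤ n) :
    (Finset.univ.filter fun i : Fin n => k ≤ i.val).card = n - k := by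
  have h1 : (Finset.univ.filter fun i : Fin n => k ≤ i.val)
      = Finset.univ.filter (fun i : Fin n => ¬ i.val < k) := by
    simp only [not_lt]
  rw [h1]
  have h2 := Finset.card_filter_add_card_filter_not
    (s := (Finset.univ : Finset (Fin n))) (p := fun i : Fin n => i.val < k)
  rw [cardlow k hk] at h2
  simp only [Finset.card_univ, Fintype.card_fin] at h2
  omega

theorem sum_split {n : ℕ} (k : ℕ) (f : Fin n → ℝ) :
    ∑ i ∈ Finset.univ.filter (fun i : Fin n => i.val < k), f i
      + ∑ i ∈ Finset.univ.filter (fun i : Fin n => k ≤ i.val), f i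
      = ∑ i, f i := by
  have h1 : (Finset.univ.filter fun i : Fin n => k ≤ i.val)
      = Finset.univ.filter (fun i : Fin n => ¬ i.val < k) := by
    simp only [not_lt]
  rw [h1]
  exact Finset.sum_filter_add_sum_filter_not _ _ _


theorem sorted_partial {n : ℕ} (x y : Fin n → ℝ)
    (hmaj : (∀ s : Finset (Fin n), ∃ t : Finset (Fin n),
        t.card = s.card ∧ ∑ i ∈ s, y i ≤ ∑ i ∈ t, x i) ∧ ∑ i, x i = ∑ i, y i)
    (k : ℕ) (hk : k ≤ n) :
    ∑ i ∈ Finset.range k, ext (x ∘ Tuple.sort x) i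
      ≤ ∑ i ∈ Finset.range k, ext (y ∘ Tuple.sort y) i := by
  classical
  set σ := Tuple.sort x with hσ
  set τ := Tuple.sort y with hτ
  set w : Fin n → ℝ := x ∘ σ with hw
  set v : Fin n → ℝ := y ∘ τ with hv
  have hwmono : Monotone w := Tuple.monotone_sort x
  -- top sum of v equals a sum of y over an image finset
  set s : Finset (Fin n) := Finset.image τ (Finset.univ.filter fun i : Fin n => k ≤ i.val)
    with hs
  have hs_sum : ∑ j ∈ s, y j
      = ∑ i ∈ Finset.univ.filter (fun i : Fin n => k ≤ i.val), v i := by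
    rw [hs]
    rw [Finset.sum_image (fun a _ b _ hab => τ.injective hab)]
    rfl
  have hs_card : s.card = n - k := by
    rw [hs, Finset.card_image_of_injective _ τ.injective, cardtop k hk]
  obtain ⟨t, htcard, hle⟩ := hmaj.1 s
  set u : Finset (Fin n) := Finset.image σ.symm t with hu
  have hu_sum : ∑ i ∈ u, w i = ∑ j ∈ t, x j := by
    rw [hu, Finset.sum_image (fun a _ b _ hab => σ.symm.injective hab)]
    apply Finset.sum_congr rfl
    intro j _
    simp [hw]
  have hu_card : u.card = (Finset.univ.filter fun i : Fin n => k ≤ i.val).card := by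
    rw [hu, Finset.card_image_of_injective _ σ.symm.injective, htcard, hs_card,
      cardtop k hk]
  have htop : ∑ i ∈ Finset.univ.filter (fun i : Fin n => k ≤ i.val), v i
      ≤ ∑ i ∈ Finset.univ.filter (fun i : Fin n => k ≤ i.val), w i := by
    calc ∑ i ∈ Finset.univ.filter (fun i : Fin n => k ≤ i.val), v i
        = ∑ j ∈ s, y j := hs_sum.symm
      _ ≤ ∑ j ∈ t, x j := hle
      _ = ∑ i ∈ u, w i := hu_sum.symm
      _ ≤ _ := sum_le_top w hwmono k u hu_card
  have htotw : ∑ i, w i = ∑ i, x i := Equiv.sum_comp σ x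
  have htotv : ∑ i, v i = ∑ i, y i := Equiv.sum_comp τ y
  have hsplitw := sum_split k w
  have hsplitv := sum_split k v
  rw [sumlow k hk, sumlow k hk]
  have htot := hmaj.2
  linarith



end PSCaux

open PSCaux Set in
theorem poisson_min_survival_schur_concave' (n r : ℕ) (x y : Fin n → ℝ)
    (hx : ∀ i, 0 < x i) (hy : ∀ i, 0 < y i)
    (hmaj : (∀ s : Finset (Fin n), ∃ t : Finset (Fin n),
        t.card = s.card ∧ ∑ i ∈ s, y i ≤ ∑ i ∈ t, x i) ∧ ∑ i, x i = ∑ i, y i) :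
    ∏ k, ((1 / (r.factorial : ℝ)) * ∫ t in (0 : ℝ)..(x k), Real.exp (-t) * t ^ r)
      ≤ ∏ k, ((1 / (r.factorial : ℝ)) * ∫ t in (0 : ℝ)..(y k), Real.exp (-t) * t ^ r) := by
  classical
  set c : ℝ := 1 / (r.factorial : ℝ) with hcdef
  have hc : 0 ≤ c := by positivity
  show (∏ k, (c * F r (x k))) ≤ ∏ k, (c * F r (y k))
  set σ := Tuple.sort x with hσ
  set τ := Tuple.sort y with hτ
  set a : ℕ → ℝ := ext (x ∘ σ) with hadef
  set b : ℕ → ℝ := ext (y ∘ τ) with hbdef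
  have ha : ∀ i, i < n → 0 < a i := by
    intro i hi
    rw [hadef, ext_lt _ hi]
    exact hx _
  have hb : ∀ i, i < n → 0 < b i := by
    intro i hi
    rw [hbdef, ext_lt _ hi]
    exact hy _
  have hbmono : ∀ i j, i ≤ j → j < n → b i ≤ b j := by
    intro i j hij hj
    have hi : i < n := lt_of_le_of_lt hij hj
    rw [hbdef, ext_lt _ hi, ext_lt _ hj]
    exact Tuple.monotone_sort y (Fin.mk_le_mk.mpr hij)
  have hpartial := sorted_partial x y hmaj
  have htotgen : ∀ (z : Fin n → ℝ) (π : Equiv.Perm (Fin n)),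
      ∑ i ∈ Finset.range n, ext (z ∘ π) i = ∑ i, z i := by
    intro z π
    rw [sumlow n le_rfl]
    have hfil : (Finset.univ.filter fun i : Fin n => i.val < n) = Finset.univ := by
      apply Finset.filter_true_of_mem
      intro i _
      exact i.isLt
    rw [hfil]
    exact Equiv.sum_comp π z
  have htot : ∑ i ∈ Finset.range n, a i = ∑ i ∈ Finset.range n, b i := by
    rw [hadef, hbdef, htotgen x σ, htotgen y τ, hmaj.2]
  have hsum := hlp r n a b ha hb hbmono hpartial htot
  -- convert range sums of g to Fin sums
  have hconv : ∀ (z : Fin n → ℝ) (π : Equiv.Perm (Fin n)),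
      ∑ i ∈ Finset.range n, g r (ext (z ∘ π) i) = ∑ k, g r (z k) := by
    intro z π
    have h1 : ∑ i ∈ Finset.range n, g r (ext (z ∘ π) i)
        = ∑ i ∈ Finset.range n, ext ((fun j => g r (z j)) ∘ π) i := by
      apply Finset.sum_congr rfl
      intro i hi
      have hi' : i < n := Finset.mem_range.mp hi
      rw [ext_lt _ hi', ext_lt _ hi']
      rfl
    rw [h1, htotgen (fun j => g r (z j)) π]
  rw [hadef, hbdef, hconv x σ, hconv y τ] at hsum
  have hprodeq : ∀ (z : Fin n → ℝ), (∀ i, 0 < z i) →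
      ∏ k, (c * F r (z k)) = c ^ n * Real.exp (∑ k, g r (z k)) := by
    intro z hz
    rw [Finset.prod_mul_distrib, Finset.prod_const, Finset.card_univ, Fintype.card_fin]
    congr 1
    rw [Real.exp_sum]
    apply Finset.prod_congr rfl
    intro k _
    rw [g, Real.exp_log (Fpos r (hz k))]
  rw [hprodeq x hx, hprodeq y hy]
  exact mul_le_mul_of_nonneg_left (Real.exp_le_exp.mpr hsum) (pow_nonneg hc n)

theorem poisson_min_survival_schur_concave (n r : ℕ) (x y : Fin n → ℝ)
    (hx : ∀ i, 0 < x i) (hy : ∀ i, 0 < y i) (hmaj : Majorizes x y) :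
    ∏ k, ((1 / (r.factorial : ℝ)) * ∫ t in (0 : ℝ)..(x k), Real.exp (-t) * t ^ r)
      ≤ ∏ k, ((1 / (r.factorial : ℝ)) * ∫ t in (0 : ℝ)..(y k), Real.exp (-t) * t ^ r) :=
  poisson_min_survival_schur_concave' n r x y hx hy hmaj
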